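/- Let a : ℕ → ℝ be a sequence with a(n) > 0 for all n ≥ 1, a(1) = a(2) = a(3) = 1, a(5) ≥ 3, and such that for every integer n ≥ 4 both a(n−1) + a(n−3) ≤ a(n) ≤ 2·a(n−1) and 2·a(n−1) − Σ_{j=2}^{n+1−⌈√(n−1)⌉} a(j) ≤ a(n). Then there exists a real constant C with 0 < C < 1 such that lim_{n→∞} a(n)/2^n = C. -/

import Mathlib

open Filter Finset Real

noncomputable def ee (n : ℕ) : ℝ := (n : ℝ) / 2 ^ ((⌈Real.sqrt ((n : ℝ) - 1)⌉₊ - 2) / 3 + 1)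

lemma ee_nonneg (n : ℕ) : 0 ≤ ee n := by unfold ee; positivity

lemma hG_tendsto (μ : ℝ) (hμ : 0 < μ) :
    Tendsto (fun y : ℝ => (y + 1) ^ 6 * Real.exp (-(μ * (y - 1)))) atTop (nhds 0) := by
  have base := Real.tendsto_pow_mul_exp_neg_atTop_nhds_zero 6
  have comp1 : Tendsto (fun z : ℝ => (μ * z) ^ 6 * Real.exp (-(μ * z))) atTop (nhds 0) := by
    have := base.comp (tendsto_id.const_mul_atTop hμ)
    simpa [Function.comp_def] using this
  have comp2 : Tendsto (fun z : ℝ => z ^ 6 * Real.exp (-(μ * z))) atTop (nhds 0) := by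
    have h := comp1.mul_const ((μ ^ 6)⁻¹)
    rw [zero_mul] at h
    refine h.congr fun z => ?_
    have : μ ^ 6 ≠ 0 := by positivity
    field_simp
  have comp3 := (comp2.comp (tendsto_atTop_add_const_right atTop 1 tendsto_id)).mul_const
      (Real.exp (2 * μ))
  rw [zero_mul] at comp3
  refine comp3.congr fun y => ?_
  simp only [Function.comp, id]
  rw [mul_assoc, ← Real.exp_add]
  ring_nf

lemma sqrt_tendsto : Tendsto (fun k : ℕ => Real.sqrt ((k : ℝ) - 1)) atTop atTop := by
  rw [tendsto_atTop]
  intro b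
  filter_upwards [eventually_ge_atTop (⌈b ^ 2 + 1⌉₊)] with k hk
  have hk' : b ^ 2 + 1 ≤ (k : ℝ) := by
    calc b ^ 2 + 1 ≤ (⌈b ^ 2 + 1⌉₊ : ℝ) := Nat.le_ceil _
    _ ≤ (k : ℝ) := by exact_mod_cast hk
  exact Real.le_sqrt_of_sq_le (by linarith)

lemma ee_ev : ∀ᶠ k in atTop, ee k ≤ 1 / (k : ℝ) ^ 2 := by
  set μ : ℝ := Real.log 2 / 3 with hμdef
  have hμ : 0 < μ := by positivity
  have hGev : ∀ᶠ (k : ℕ) in atTop,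
      (Real.sqrt ((k : ℝ) - 1) + 1) ^ 6 *
        Real.exp (-(μ * (Real.sqrt ((k : ℝ) - 1) - 1))) ≤ 1 := by
    have h := (hG_tendsto μ hμ).comp sqrt_tendsto
    have h2 := h.eventually_le_const one_pos
    simpa [Function.comp] using h2
  filter_upwards [hGev, eventually_ge_atTop 1] with k hGk hk1
  have hk1' : (1 : ℝ) ≤ (k : ℝ) := by exact_mod_cast hk1
  set s := Real.sqrt ((k : ℝ) - 1) with hs
  have hs0 : 0 ≤ s := Real.sqrt_nonneg _
  have hsq : s ^ 2 = (k : ℝ) - 1 := Real.sq_sqrt (by linarith)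
  -- (k:ℝ)^3 ≤ (s+1)^6
  have hk3 : (k : ℝ) ^ 3 ≤ (s + 1) ^ 6 := by
    have h2 : (k : ℝ) ≤ (s + 1) ^ 2 := by nlinarith
    calc (k : ℝ) ^ 3 ≤ ((s + 1) ^ 2) ^ 3 := by
          apply pow_le_pow_left₀ (by linarith) h2
    _ = (s + 1) ^ 6 := by ring
  have hexp : (k : ℝ) ^ 3 ≤ Real.exp (μ * (s - 1)) := by
    have h1 : (k : ℝ) ^ 3 * Real.exp (-(μ * (s - 1))) ≤ 1 := by
      calc (k : ℝ) ^ 3 * Real.exp (-(μ * (s - 1)))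
          ≤ (s + 1) ^ 6 * Real.exp (-(μ * (s - 1))) := by
            apply mul_le_mul_of_nonneg_right hk3 (Real.exp_pos _).le
      _ ≤ 1 := hGk
    have h2 := mul_le_mul_of_nonneg_right h1 (Real.exp_pos (μ * (s - 1))).le
    rwa [one_mul, mul_assoc, ← Real.exp_add, neg_add_cancel, Real.exp_zero, mul_one] at h2
  -- exponent bound
  set c := ⌈s⌉₊ with hc
  set f := (c - 2) / 3 + 1 with hf
  have hfc : (c : ℝ) - 1 ≤ 3 * (f : ℝ) := by
    have h1 : c + 1 ≤ 3 * f + 2 := by omega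
    have h2 : ((c : ℝ)) + 1 ≤ 3 * (f : ℝ) + 2 := by exact_mod_cast h1
    linarith
  have hsc : s ≤ (c : ℝ) := Nat.le_ceil s
  have hpow : Real.exp (μ * (s - 1)) ≤ (2 : ℝ) ^ f := by
    have h2 : ((2 : ℝ)) ^ f = Real.exp (Real.log 2 * (f : ℝ)) := by
      rw [← Real.rpow_natCast 2 f, Real.rpow_def_of_pos (by norm_num : (0:ℝ) < 2)]
    rw [h2]
    apply Real.exp_le_exp.2
    have hlog : 0 < Real.log 2 := Real.log_pos (by norm_num)
    have : μ * (s - 1) ≤ Real.log 2 / 3 * (3 * (f : ℝ)) := by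
      apply mul_le_mul_of_nonneg_left _ (le_of_lt hμ) |>.trans_eq rfl
      linarith
    calc μ * (s - 1) ≤ Real.log 2 / 3 * (3 * (f : ℝ)) := this
    _ = Real.log 2 * (f : ℝ) := by ring
  have hk3f : (k : ℝ) ^ 3 ≤ (2 : ℝ) ^ f := hexp.trans hpow
  -- conclude
  show (k : ℝ) / 2 ^ ((⌈Real.sqrt ((k : ℝ) - 1)⌉₊ - 2) / 3 + 1) ≤ 1 / (k : ℝ) ^ 2
  have hk3pos : (0 : ℝ) < (k : ℝ) ^ 3 := by positivity
  calc (k : ℝ) / 2 ^ ((⌈Real.sqrt ((k : ℝ) - 1)⌉₊ - 2) / 3 + 1)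
      ≤ (k : ℝ) / (k : ℝ) ^ 3 := by
        apply div_le_div_of_nonneg_left (by linarith) hk3pos hk3f
  _ = 1 / (k : ℝ) ^ 2 := by
        field_simp

set_option maxHeartbeats 1000000 in
lemma ee_summable : Summable ee := by
  obtain ⟨K, hK⟩ := eventually_atTop.1 ee_ev
  have hsub : Summable (fun n : ℕ => 1 / ((n : ℝ)) ^ 2) :=
    summable_one_div_nat_pow.2 one_lt_two
  have hshift : Summable (fun n : ℕ => ee (n + K)) := by
    apply Summable.of_nonneg_of_le (fun n => ee_nonneg _)
      (fun n => hK (n + K) (Nat.le_add_left _ _))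
    exact (summable_nat_add_iff K).2 hsub
  exact (summable_nat_add_iff K).1 hshift

set_option maxHeartbeats 1000000 in
lemma ee_tail : ∃ N : ℕ, 3 ≤ N ∧ ∀ n, N ≤ n → ∑ k ∈ Icc (N + 1) n, ee k ≤ 1 / 2 := by
  have htail := tendsto_sum_nat_add ee
  have hev := htail.eventually_le_const (by norm_num : (0:ℝ) < 1/2)
  obtain ⟨M, hM⟩ := eventually_atTop.1 hev
  refine ⟨max M 3, le_max_right _ _, fun n hn => ?_⟩
  set N := max M 3 with hN
  have hsum : ∑ k ∈ Icc (N + 1) n, ee k = ∑ i ∈ range (n + 1 - (N + 1)), ee (N + 1 + i) := by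
    rw [← Finset.Ico_add_one_right_eq_Icc, Finset.sum_Ico_eq_sum_range]
  rw [hsum]
  have hsummable : Summable (fun i => ee (N + 1 + i)) := by
    apply ((summable_nat_add_iff (N + 1)).2 ee_summable).congr
    intro i; rw [add_comm]
  calc ∑ i ∈ range (n + 1 - (N + 1)), ee (N + 1 + i)
      ≤ ∑' i, ee (N + 1 + i) := Summable.sum_le_tsum _ (fun i _ => ee_nonneg _) hsummable
  _ = ∑' i, ee (i + (N + 1)) := tsum_congr fun i => by rw [add_comm]
  _ ≤ 1 / 2 := hM (N + 1) (le_trans (le_max_left M 3) (Nat.le_succ_of_le le_rfl))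

theorem stmt_0 (a : ℕ → ℝ)
    (hpos : ∀ n, 1 ≤ n → 0 < a n)
    (h1 : a 1 = 1) (h2 : a 2 = 1) (h3 : a 3 = 1) (h5 : 3 ≤ a 5)
    (hlow : ∀ n, 4 ≤ n → a (n - 1) + a (n - 3) ≤ a n)
    (hup : ∀ n, 4 ≤ n → a n ≤ 2 * a (n - 1))
    (hlow2 : ∀ n, 4 ≤ n →
      2 * a (n - 1) - ∑ j ∈ Finset.Icc 2 (n + 1 - ⌈Real.sqrt ((n : ℝ) - 1)⌉₊), a j ≤ a n) :
    ∃ C : ℝ, 0 < C ∧ C < 1 ∧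
      Tendsto (fun n => a n / 2 ^ n) atTop (nhds C) := by
  set b : ℕ → ℝ := fun n => a n / 2 ^ n with hbdef
  -- monotonicity of a
  have astep : ∀ n, 1 ≤ n → a n ≤ a (n + 1) := by
    intro n hn
    rcases Nat.lt_or_ge n 3 with h | h
    · interval_cases n <;> simp [h1, h2, h3]
    · have hl := hlow (n + 1) (by omega)
      have he1 : n + 1 - 1 = n := by omega
      have hp : 0 < a (n + 1 - 3) := hpos _ (by omega)
      rw [he1] at hl
      linarith
  have amono : ∀ m n, 1 ≤ m → m ≤ n → a m ≤ a n := by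
    intro m n hm hmn
    induction n, hmn using Nat.le_induction with
    | base => exact le_rfl
    | succ n hn ih => exact le_trans ih (astep n (le_trans hm hn))
  have apos := hpos
  have bpos : ∀ n, 1 ≤ n → 0 < b n := fun n hn => by
    have := apos n hn; positivity
  -- b antitone from 3 on
  have bstep : ∀ n, 3 ≤ n → b (n + 1) ≤ b n := by
    intro n hn
    have hu := hup (n + 1) (by omega)
    have he1 : n + 1 - 1 = n := by omega
    rw [he1] at hu
    show a (n + 1) / 2 ^ (n + 1) ≤ a n / 2 ^ n
    rw [pow_succ]
    rw [div_le_div_iff₀ (by positivity) (by positivity)]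
    calc a (n + 1) * 2 ^ n ≤ 2 * a n * 2 ^ n := by
          apply mul_le_mul_of_nonneg_right hu (by positivity)
    _ = a n * (2 ^ n * 2) := by ring
  have banti : ∀ m n, 3 ≤ m → m ≤ n → b n ≤ b m := by
    intro m n hm hmn
    induction n, hmn using Nat.le_induction with
    | base => exact le_rfl
    | succ n hn ih => exact le_trans (bstep n (le_trans hm hn)) ih
  -- doubling
  have dbl : ∀ k, 1 ≤ k → 2 * a k ≤ a (k + 3) := by
    intro k hk
    have hl := hlow (k + 3) (by omega)
    have he1 : k + 3 - 1 = k + 2 := by omega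
    have he3 : k + 3 - 3 = k := by omega
    rw [he1, he3] at hl
    have := amono k (k + 2) hk (by omega)
    linarith
  have dblpow : ∀ k, 1 ≤ k → ∀ t, (2 : ℝ) ^ t * a k ≤ a (k + 3 * t) := by
    intro k hk t
    induction t with
    | zero => simpa using le_rfl
    | succ t ih =>
      have h1 := dbl (k + 3 * t) (by omega)
      have he : k + 3 * t + 3 = k + 3 * (t + 1) := by ring
      rw [he] at h1
      calc (2 : ℝ) ^ (t + 1) * a k = 2 * ((2 : ℝ) ^ t * a k) := by ring
      _ ≤ 2 * a (k + 3 * t) := by linarith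
      _ ≤ a (k + 3 * (t + 1)) := h1
  -- key step inequality
  have key : ∀ p, 3 ≤ p → b p * (1 - ee (p + 1)) ≤ b (p + 1) := by
    intro p hp
    have hl2 := hlow2 (p + 1) (by omega)
    have he1 : p + 1 - 1 = p := by omega
    rw [he1] at hl2
    have hcast : ((p + 1 : ℕ) : ℝ) - 1 = (p : ℝ) := by push_cast; ring
    rw [hcast] at hl2
    set c := ⌈Real.sqrt (p : ℝ)⌉₊ with hc
    set t := (c - 2) / 3 with ht
    have hee : ee (p + 1) = ((p : ℝ) + 1) / 2 ^ (t + 1) := by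
      unfold ee
      rw [hcast]
      push_cast
      ring_nf
      rw [ht, hc]
    have hc2 : 2 ≤ c := by
      rw [hc]
      have : (1 : ℝ) < Real.sqrt (p : ℝ) := by
        rw [show (1:ℝ) = Real.sqrt 1 by simp]
        apply Real.sqrt_lt_sqrt (by norm_num)
        exact_mod_cast (by omega : 1 < p)
      exact Nat.lt_ceil.2 (by exact_mod_cast this)
    set m := p + 1 + 1 - c with hm
    have hap : 0 < a p := apos p (by omega)
    have hS : ∑ j ∈ Icc 2 m, a j ≤ ((p : ℝ) + 1) * (a p / 2 ^ t) := by
      rcases Nat.lt_or_ge m 2 with hm2 | hm2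
      · rw [Finset.Icc_eq_empty (by omega)]
        simp only [Finset.sum_empty]
        positivity
      · have hcp : c ≤ p := by omega
        have hm1 : 1 ≤ m := by omega
        have hmp : m + 3 * t ≤ p := by
          have h3t : 3 * t ≤ c - 2 := by
            rw [ht]; omega
          omega
        have ham : a m ≤ a p / 2 ^ t := by
          rw [le_div_iff₀ (by positivity)]
          calc a m * 2 ^ t = (2:ℝ) ^ t * a m := by ring
          _ ≤ a (m + 3 * t) := dblpow m hm1 t
          _ ≤ a p := amono _ _ (by omega) hmp
        calc ∑ j ∈ Icc 2 m, a j ≤ ∑ j ∈ Icc 2 m, a m := by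
              apply Finset.sum_le_sum
              intro j hj
              rw [Finset.mem_Icc] at hj
              exact amono j m (by omega) hj.2
        _ = ((m - 1 : ℕ) : ℝ) * a m := by
              rw [Finset.sum_const, Nat.card_Icc]
              have : m + 1 - 2 = m - 1 := by omega
              rw [this, nsmul_eq_mul]
        _ ≤ ((p : ℝ) + 1) * a m := by
              apply mul_le_mul_of_nonneg_right _ (le_of_lt (apos m hm1))
              have : m - 1 ≤ p + 1 := by omega
              exact_mod_cast this
        _ ≤ ((p : ℝ) + 1) * (a p / 2 ^ t) := by
              apply mul_le_mul_of_nonneg_left ham (by positivity)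
    -- combine
    have hkey : a p * (2 - ((p : ℝ) + 1) / 2 ^ t) ≤ a (p + 1) := by
      have : 2 * a p - ((p : ℝ) + 1) * (a p / 2 ^ t) ≤ a (p + 1) := by linarith
      calc a p * (2 - ((p : ℝ) + 1) / 2 ^ t)
          = 2 * a p - ((p : ℝ) + 1) * (a p / 2 ^ t) := by ring
      _ ≤ a (p + 1) := this
    show b p * (1 - ee (p + 1)) ≤ a (p + 1) / 2 ^ (p + 1)
    rw [hee]
    have hrw : b p * (1 - ((p:ℝ) + 1) / 2 ^ (t + 1))
        = a p * (2 - ((p:ℝ) + 1) / 2 ^ t) / 2 ^ (p + 1) := by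
      show a p / 2 ^ p * _ = _
      field_simp
      ring
    rw [hrw]
    exact (div_le_div_iff_of_pos_right (by positivity)).2 hkey
  -- telescoping
  have tele : ∀ N, 3 ≤ N → ∀ n, N ≤ n →
      b N * (1 - ∑ k ∈ Icc (N + 1) n, ee k) ≤ b n := by
    intro N hN n hn
    induction n, hn using Nat.le_induction with
    | base =>
      rw [Finset.Icc_eq_empty (by omega)]
      simp
    | succ n hn ih =>
      have hk := key n (le_trans hN hn)
      have hsum : ∑ k ∈ Icc (N + 1) (n + 1), ee k
          = ∑ k ∈ Icc (N + 1) n, ee k + ee (n + 1) :=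
        Finset.sum_Icc_succ_top (by omega) _
      rw [hsum]
      have hbn : b n ≤ b N := banti N n hN hn
      have he := ee_nonneg (n + 1)
      nlinarith [mul_nonneg he (sub_nonneg.2 hbn)]
  -- assembly
  obtain ⟨N, hN3, hNtail⟩ := ee_tail
  have hbN : 0 < b N := bpos N (by omega)
  have blower : ∀ n, N ≤ n → b N * (1 / 2) ≤ b n := by
    intro n hn
    have hT1 := tele N hN3 n hn
    have hT2 := hNtail n hn
    nlinarith
  have hanti : Antitone (fun n => b (n + 3)) :=
    antitone_nat_of_succ_le (fun n => bstep (n + 3) (by omega))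
  have hbdd : BddBelow (Set.range (fun n => b (n + 3))) := by
    refine ⟨0, ?_⟩
    rintro x ⟨n, rfl⟩
    exact (bpos (n + 3) (by omega)).le
  have hlim3 : Tendsto (fun n => b (n + 3)) atTop (nhds (⨅ n, b (n + 3))) :=
    tendsto_atTop_ciInf hanti hbdd
  set C := ⨅ n, b (n + 3) with hC
  have hlim : Tendsto b atTop (nhds C) := (tendsto_add_atTop_iff_nat 3).1 hlim3
  have hCge : b N * (1 / 2) ≤ C :=
    ge_of_tendsto hlim (eventually_atTop.2 ⟨N, blower⟩)
  have hCle : C ≤ b 3 :=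
    le_of_tendsto hlim (eventually_atTop.2 ⟨3, fun n hn => banti 3 n le_rfl hn⟩)
  have hb3 : b 3 = 1 / 8 := by
    show a 3 / 2 ^ 3 = 1 / 8
    rw [h3]; norm_num
  refine ⟨C, lt_of_lt_of_le (mul_pos hbN (by norm_num)) hCge, ?_, hlim⟩
  rw [hb3] at hCle
  linarith
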